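/- Under the hypotheses U continuous with 0 < U₁ ≤ U ≤ U₂ on [ε, ħω_D]² and fixed T ∈ [0, τ₂], the operator A : V_T → V_T defined by (Au)(x) = ∫_ε^{ħω_D} U(x,ξ)(u(ξ)/√(ξ²+u(ξ)²)) tanh(√(ξ²+u(ξ)²)/(2T)) dξ is continuous and maps V_T into a uniformly bounded, equicontinuous family; hence A is a compact operator on V_T. -/

import Mathlib

/-- The tanh factor tanh(r/(2T)), interpreted as 1 at T = 0. -/
noncomputable def tanhFac (T r : ℝ) : ℝ :=
  if T = 0 then 1 else Real.tanh (r / (2 * T))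


lemma abs_tanh_le_one (x : ℝ) : |Real.tanh x| ≤ 1 := by
  rw [Real.tanh_eq_sinh_div_cosh, abs_div, abs_of_pos (Real.cosh_pos x),
    div_le_one (Real.cosh_pos x)]
  nlinarith [Real.cosh_sq x, abs_nonneg (Real.sinh x), sq_abs (Real.sinh x), Real.cosh_pos x]

lemma hasDerivAt_tanh (x : ℝ) : HasDerivAt Real.tanh (1 / Real.cosh x ^ 2) x := by
  have h := (Real.hasDerivAt_sinh x).div (Real.hasDerivAt_cosh x) (Real.cosh_pos x).ne'
  have he : (fun y => Real.sinh y / Real.cosh y) = Real.tanh :=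
    funext fun y => (Real.tanh_eq_sinh_div_cosh y).symm
  rw [show (Real.sinh / Real.cosh) = Real.tanh from he] at h
  refine h.congr_deriv ?_
  have h2 := Real.cosh_sq_sub_sinh_sq x
  field_simp
  nlinarith [h2]

lemma tanh_lipschitz (a b : ℝ) : |Real.tanh a - Real.tanh b| ≤ |a - b| := by
  have := convex_univ.norm_image_sub_le_of_norm_hasDerivWithin_le
    (f := Real.tanh) (f' := fun x => 1 / Real.cosh x ^ 2) (s := Set.univ)
    (fun x _ => (hasDerivAt_tanh x).hasDerivWithinAt)
    (fun x _ => by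
      rw [Real.norm_eq_abs, abs_of_pos (by positivity),
        div_le_one (by positivity)]
      nlinarith [Real.one_le_cosh x])
    (Set.mem_univ b) (Set.mem_univ a)
  simpa [Real.norm_eq_abs] using this

lemma continuous_tanh : Continuous Real.tanh :=
  continuous_iff_continuousAt.2 fun x => (hasDerivAt_tanh x).differentiableAt.continuousAt

lemma tanhFac_continuous (T : ℝ) : Continuous (tanhFac T) := by
  unfold tanhFac
  split
  · exact continuous_const
  · exact continuous_tanh.comp (continuous_id.div_const _)

lemma abs_tanhFac_le_one (T r : ℝ) : |tanhFac T r| ≤ 1 := by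
  unfold tanhFac; split
  · simp
  · exact abs_tanh_le_one _

lemma sqrtq_pos {ξ : ℝ} (hξ : ξ ≠ 0) (t : ℝ) : 0 < Real.sqrt (ξ ^ 2 + t ^ 2) :=
  Real.sqrt_pos.2 (by positivity)

lemma hasDerivAt_sqrtq {ξ : ℝ} (hξ : ξ ≠ 0) (t : ℝ) :
    HasDerivAt (fun t : ℝ => Real.sqrt (ξ ^ 2 + t ^ 2))
      (t / Real.sqrt (ξ ^ 2 + t ^ 2)) t := by
  have h1 : HasDerivAt (fun t : ℝ => ξ ^ 2 + t ^ 2) (2 * t) t := by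
    simpa using (hasDerivAt_pow 2 t).const_add (ξ ^ 2)
  have h := h1.sqrt (by positivity)
  convert h using 1
  have h0 := (sqrtq_pos hξ t).ne'
  field_simp

lemma abs_le_sqrtq (ξ t : ℝ) : |t| ≤ Real.sqrt (ξ ^ 2 + t ^ 2) := by
  rw [← Real.sqrt_sq_eq_abs]
  exact Real.sqrt_le_sqrt (by nlinarith [sq_nonneg ξ])

lemma sqrtq_lip {ξ : ℝ} (hξ : ξ ≠ 0) (t s : ℝ) :
    |Real.sqrt (ξ ^ 2 + t ^ 2) - Real.sqrt (ξ ^ 2 + s ^ 2)| ≤ |t - s| := by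
  have := convex_univ.norm_image_sub_le_of_norm_hasDerivWithin_le
    (f := fun t : ℝ => Real.sqrt (ξ ^ 2 + t ^ 2))
    (f' := fun t => t / Real.sqrt (ξ ^ 2 + t ^ 2)) (s := Set.univ)
    (fun x _ => (hasDerivAt_sqrtq hξ x).hasDerivWithinAt)
    (fun x _ => by
      rw [Real.norm_eq_abs, abs_div, abs_of_pos (sqrtq_pos hξ x),
        div_le_one (sqrtq_pos hξ x)]
      exact abs_le_sqrtq ξ x)
    (Set.mem_univ s) (Set.mem_univ t)
  simpa [Real.norm_eq_abs] using this

lemma abs_phi_le_one (ξ t : ℝ) : |t / Real.sqrt (ξ ^ 2 + t ^ 2)| ≤ 1 := by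
  rcases eq_or_ne (Real.sqrt (ξ ^ 2 + t ^ 2)) 0 with h | h
  · simp [h]
  · have hpos : 0 < Real.sqrt (ξ ^ 2 + t ^ 2) :=
      lt_of_le_of_ne (Real.sqrt_nonneg _) (Ne.symm h)
    rw [abs_div, abs_of_pos hpos, div_le_one hpos]
    exact abs_le_sqrtq ξ t

lemma hasDerivAt_phi {ξ : ℝ} (hξ : ξ ≠ 0) (t : ℝ) :
    HasDerivAt (fun t : ℝ => t / Real.sqrt (ξ ^ 2 + t ^ 2))
      (ξ ^ 2 / Real.sqrt (ξ ^ 2 + t ^ 2) ^ 3) t := by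
  have h := (hasDerivAt_id t).div (hasDerivAt_sqrtq hξ t) (sqrtq_pos hξ t).ne'
  refine h.congr_deriv ?_
  have h0 := (sqrtq_pos hξ t).ne'
  have h2 : Real.sqrt (ξ ^ 2 + t ^ 2) ^ 2 = ξ ^ 2 + t ^ 2 :=
    Real.sq_sqrt (by positivity)
  field_simp
  simp only [id_eq]
  linear_combination h2

lemma phi_lip {ε ξ : ℝ} (hε : 0 < ε) (hξ : ε ≤ ξ) (t s : ℝ) :
    |t / Real.sqrt (ξ ^ 2 + t ^ 2) - s / Real.sqrt (ξ ^ 2 + s ^ 2)| ≤ (1 / ε) * |t - s| := by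
  have hξ0 : (0:ℝ) < ξ := lt_of_lt_of_le hε hξ
  have := convex_univ.norm_image_sub_le_of_norm_hasDerivWithin_le
    (f := fun t : ℝ => t / Real.sqrt (ξ ^ 2 + t ^ 2))
    (f' := fun t => ξ ^ 2 / Real.sqrt (ξ ^ 2 + t ^ 2) ^ 3) (s := Set.univ) (C := 1 / ε)
    (fun x _ => (hasDerivAt_phi hξ0.ne' x).hasDerivWithinAt)
    (fun x _ => by
      have hr : ξ ≤ Real.sqrt (ξ ^ 2 + x ^ 2) := by
        calc ξ = |ξ| := (abs_of_pos hξ0).symm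
        _ ≤ _ := by simpa [add_comm] using abs_le_sqrtq x ξ
      have hrpos := sqrtq_pos hξ0.ne' x
      rw [Real.norm_eq_abs, abs_of_pos (by positivity)]
      rw [div_le_div_iff₀ (by positivity) hε]
      have h3 : ξ ^ 3 ≤ Real.sqrt (ξ ^ 2 + x ^ 2) ^ 3 := pow_le_pow_left₀ hξ0.le hr 3
      nlinarith [h3, mul_le_mul_of_nonneg_left hξ (sq_nonneg ξ)])
    (Set.mem_univ s) (Set.mem_univ t)
  simpa [Real.norm_eq_abs] using this

noncomputable def gfun (T ξ t : ℝ) : ℝ :=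
  t / Real.sqrt (ξ ^ 2 + t ^ 2) * tanhFac T (Real.sqrt (ξ ^ 2 + t ^ 2))

lemma abs_gfun_le_one (T ξ t : ℝ) : |gfun T ξ t| ≤ 1 := by
  rw [gfun, abs_mul]
  exact mul_le_one₀ (abs_phi_le_one ξ t) (abs_nonneg _) (abs_tanhFac_le_one T _)

/-- Lipschitz constant for `gfun T ξ ·`. -/
noncomputable def gLip (ε T : ℝ) : ℝ := 1 / ε + (if T = 0 then 0 else 1 / (2 * T))

lemma gLip_nonneg {ε T : ℝ} (hε : 0 < ε) (hT : 0 ≤ T) : 0 ≤ gLip ε T := by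
  unfold gLip
  have : (0:ℝ) ≤ 1 / ε := by positivity
  split
  · simpa
  · have hT' : 0 < T := lt_of_le_of_ne hT (Ne.symm (by assumption))
    positivity

lemma gfun_lip {ε T ξ : ℝ} (hε : 0 < ε) (hT : 0 ≤ T) (hξ : ε ≤ ξ) (t s : ℝ) :
    |gfun T ξ t - gfun T ξ s| ≤ gLip ε T * |t - s| := by
  have hξ0 : (0:ℝ) < ξ := lt_of_lt_of_le hε hξ
  set rt := Real.sqrt (ξ ^ 2 + t ^ 2)
  set rs := Real.sqrt (ξ ^ 2 + s ^ 2)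
  have key : |gfun T ξ t - gfun T ξ s| ≤
      |t / rt - s / rs| * |tanhFac T rt| + |s / rs| * |tanhFac T rt - tanhFac T rs| := by
    rw [gfun]
    calc |t / rt * tanhFac T rt - s / rs * tanhFac T rs|
        = |(t / rt - s / rs) * tanhFac T rt + s / rs * (tanhFac T rt - tanhFac T rs)| := by
          ring_nf
      _ ≤ _ := by
          refine (abs_add_le _ _).trans ?_
          rw [abs_mul, abs_mul]
  have h1 : |t / rt - s / rs| * |tanhFac T rt| ≤ (1 / ε) * |t - s| :=
    (mul_le_of_le_one_right (abs_nonneg _) (abs_tanhFac_le_one _ _)).trans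
      (phi_lip hε hξ t s)
  have h2 : |s / rs| * |tanhFac T rt - tanhFac T rs| ≤
      (if T = 0 then 0 else 1 / (2 * T)) * |t - s| := by
    rcases eq_or_ne T 0 with hT0 | hT0
    · simp [hT0, tanhFac]
    · have hT' : (0:ℝ) < T := lt_of_le_of_ne hT (Ne.symm hT0)
      simp only [hT0, if_false, tanhFac]
      have htan : |Real.tanh (rt / (2 * T)) - Real.tanh (rs / (2 * T))| ≤
          |t - s| / (2 * T) := by
        refine (tanh_lipschitz _ _).trans ?_
        rw [div_sub_div_same, abs_div, abs_of_pos (show (0:ℝ) < 2 * T by linarith)]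
        rw [div_le_div_iff_of_pos_right (show (0:ℝ) < 2 * T by linarith)]
        exact sqrtq_lip hξ0.ne' t s
      calc |s / rs| * |Real.tanh (rt / (2 * T)) - Real.tanh (rs / (2 * T))|
          ≤ 1 * (|t - s| / (2 * T)) :=
            mul_le_mul (abs_phi_le_one ξ s) htan (abs_nonneg _) zero_le_one
        _ = 1 / (2 * T) * |t - s| := by ring
  calc |gfun T ξ t - gfun T ξ s| ≤ _ := key
    _ ≤ (1 / ε) * |t - s| + (if T = 0 then 0 else 1 / (2 * T)) * |t - s| :=
        add_le_add h1 h2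
    _ = gLip ε T * |t - s| := by rw [gLip, add_mul]

lemma gfun_contOn (T ε : ℝ) (hε : 0 < ε) :
    ContinuousOn (fun p : ℝ × ℝ => gfun T p.1 p.2) {p : ℝ × ℝ | ε ≤ p.1} := by
  have hs : Continuous (fun p : ℝ × ℝ => Real.sqrt (p.1 ^ 2 + p.2 ^ 2)) :=
    Real.continuous_sqrt.comp ((continuous_fst.pow 2).add (continuous_snd.pow 2))
  have hne : ∀ p ∈ {p : ℝ × ℝ | ε ≤ p.1}, Real.sqrt (p.1 ^ 2 + p.2 ^ 2) ≠ 0 :=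
    fun p hp => (sqrtq_pos (ne_of_gt (lt_of_lt_of_le hε hp)) p.2).ne'
  exact (continuous_snd.continuousOn.div hs.continuousOn hne).mul
    ((tanhFac_continuous T).comp_continuousOn hs.continuousOn)

/-- The operator A : V_T → V_T is continuous and its image is relatively compact in the
sup-norm topology; hence A is a compact operator on V_T. -/
theorem stmt13 (U₁ U₂ ε ω τ₁ τ₂ : ℝ) (hε : 0 < ε) (hεω : ε < ω)
    (hU₁ : 0 < U₁) (hU₁₂ : U₁ < U₂)
    (U : ℝ → ℝ → ℝ)
    (hUcont : ContinuousOn (fun p : ℝ × ℝ => U p.1 p.2) (Set.Icc ε ω ×ˢ Set.Icc ε ω))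
    (hUbd : ∀ x ∈ Set.Icc ε ω, ∀ ξ ∈ Set.Icc ε ω, U₁ ≤ U x ξ ∧ U x ξ ≤ U₂)
    (hτ₁pos : 0 < τ₁) (hτ₂pos : 0 < τ₂)
    (hτ₁ : 1 = U₁ * ∫ ξ in ε..ω, (1 / ξ) * Real.tanh (ξ / (2 * τ₁)))
    (hτ₂ : 1 = U₂ * ∫ ξ in ε..ω, (1 / ξ) * Real.tanh (ξ / (2 * τ₂)))
    (T Δ₁ Δ₂ : ℝ) (hT : 0 ≤ T) (hTτ₂ : T ≤ τ₂)
    (hΔ₁nonneg : 0 ≤ Δ₁) (hΔ₂nonneg : 0 ≤ Δ₂)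
    (hΔ₁eq : T < τ₁ →
      1 = U₁ * ∫ ξ in ε..ω,
        (1 / Real.sqrt (ξ ^ 2 + Δ₁ ^ 2)) * tanhFac T (Real.sqrt (ξ ^ 2 + Δ₁ ^ 2)))
    (hΔ₁zero : τ₁ ≤ T → Δ₁ = 0)
    (hΔ₂eq : T < τ₂ →
      1 = U₂ * ∫ ξ in ε..ω,
        (1 / Real.sqrt (ξ ^ 2 + Δ₂ ^ 2)) * tanhFac T (Real.sqrt (ξ ^ 2 + Δ₂ ^ 2)))
    (hΔ₂zero : τ₂ ≤ T → Δ₂ = 0)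
    (A : C(Set.Icc ε ω, ℝ) → C(Set.Icc ε ω, ℝ))
    (hA : ∀ u : C(Set.Icc ε ω, ℝ), ∀ x : Set.Icc ε ω,
      A u x = ∫ ξ in ε..ω,
        U x ξ * (u ⟨max ε (min ξ ω), by
            constructor <;> simp [le_max_iff, le_min_iff, hεω.le, le_refl]⟩ /
            Real.sqrt (ξ ^ 2 + (u ⟨max ε (min ξ ω), by
              constructor <;> simp [le_max_iff, le_min_iff, hεω.le, le_refl]⟩) ^ 2)) *
          tanhFac T (Real.sqrt (ξ ^ 2 + (u ⟨max ε (min ξ ω), by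
            constructor <;> simp [le_max_iff, le_min_iff, hεω.le, le_refl]⟩) ^ 2))) :
    ContinuousOn A {u : C(Set.Icc ε ω, ℝ) | ∀ x, Δ₁ ≤ u x ∧ u x ≤ Δ₂} ∧
    IsCompact (closure
      (A '' {u : C(Set.Icc ε ω, ℝ) | ∀ x, Δ₁ ≤ u x ∧ u x ≤ Δ₂})) := by
  classical
  have hεω' : (ε : ℝ) ≤ ω := hεω.le
  have hωε : (0:ℝ) < ω - ε := by linarith
  have hU₂pos : (0:ℝ) < U₂ := hU₁.trans hU₁₂
  set clamp : ℝ → Set.Icc ε ω := fun ξ =>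
    ⟨max ε (min ξ ω), by
      constructor <;> simp [le_max_iff, le_min_iff, hεω.le, le_refl]⟩ with hclamp
  have hclampc : Continuous clamp := by
    apply Continuous.subtype_mk
    exact continuous_const.max (continuous_id.min continuous_const)
  have hA' : ∀ u : C(Set.Icc ε ω, ℝ), ∀ x : Set.Icc ε ω,
      A u x = ∫ ξ in ε..ω, U x ξ * gfun T ξ (u (clamp ξ)) := by
    intro u x
    rw [hA u x]
    apply intervalIntegral.integral_congr
    intro ξ _
    simp only [hclamp, gfun]
    rw [mul_assoc]
  -- interval integrability of the integrands
  have hint : ∀ (u : C(Set.Icc ε ω, ℝ)) (x : Set.Icc ε ω),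
      IntervalIntegrable (fun ξ => U x ξ * gfun T ξ (u (clamp ξ)))
        MeasureTheory.volume ε ω := by
    intro u x
    apply ContinuousOn.intervalIntegrable
    rw [Set.uIcc_of_le hεω']
    apply ContinuousOn.mul
    · have hmap : Set.MapsTo (fun ξ : ℝ => ((x : ℝ), ξ)) (Set.Icc ε ω)
          (Set.Icc ε ω ×ˢ Set.Icc ε ω) := fun ξ hξ => ⟨x.2, hξ⟩
      exact hUcont.comp ((continuous_const.prodMk continuous_id).continuousOn) hmap
    · have hc : Continuous (fun ξ : ℝ => (ξ, u (clamp ξ))) :=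
        continuous_id.prodMk (u.continuous.comp hclampc)
      exact (gfun_contOn T ε hε).comp hc.continuousOn (fun ξ hξ => hξ.1)
  -- difference of integrals bound
  have hdiff : ∀ f g : ℝ → ℝ, IntervalIntegrable f MeasureTheory.volume ε ω →
      IntervalIntegrable g MeasureTheory.volume ε ω → ∀ C : ℝ,
      (∀ ξ ∈ Set.Ioc ε ω, |f ξ - g ξ| ≤ C) →
      |(∫ ξ in ε..ω, f ξ) - ∫ ξ in ε..ω, g ξ| ≤ C * (ω - ε) := by
    intro f g hf hg C hC
    rw [← intervalIntegral.integral_sub hf hg]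
    have h := intervalIntegral.norm_integral_le_of_norm_le_const
      (C := C) (f := fun ξ => f ξ - g ξ) (a := ε) (b := ω) (by
        intro ξ hξ
        rw [Set.uIoc_of_le hεω'] at hξ
        simpa [Real.norm_eq_abs] using hC ξ hξ)
    rw [Real.norm_eq_abs, abs_of_nonneg (by linarith : (0:ℝ) ≤ ω - ε)] at h
    exact h
  set L : ℝ := gLip ε T with hLdef
  have hL : 0 ≤ L := gLip_nonneg hε hT
  -- A is Lipschitz
  have hAlip : ∀ u v : C(Set.Icc ε ω, ℝ),
      dist (A u) (A v) ≤ U₂ * L * (ω - ε) * dist u v := by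
    intro u v
    have hC0 : (0:ℝ) ≤ U₂ * L * (ω - ε) * dist u v := by
      have := dist_nonneg (x := u) (y := v)
      positivity
    rw [ContinuousMap.dist_le hC0]
    intro x
    rw [Real.dist_eq, hA' u x, hA' v x]
    have hb := hdiff _ _ (hint u x) (hint v x) (U₂ * (L * dist u v)) (by
      intro ξ hξ
      have hξIcc : ξ ∈ Set.Icc ε ω := ⟨hξ.1.le, hξ.2⟩
      have hU := hUbd x x.2 ξ hξIcc
      rw [← mul_sub, abs_mul]
      have h1 : |U (↑x) ξ| ≤ U₂ := by
        rw [abs_of_pos (lt_of_lt_of_le hU₁ hU.1)]; exact hU.2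
      have h2 : |gfun T ξ (u (clamp ξ)) - gfun T ξ (v (clamp ξ))| ≤ L * dist u v := by
        refine (gfun_lip hε hT hξ.1.le _ _).trans ?_
        have hd : |u (clamp ξ) - v (clamp ξ)| ≤ dist u v := by
          rw [← Real.dist_eq]; exact ContinuousMap.dist_apply_le_dist _
        exact mul_le_mul_of_nonneg_left hd hL
      exact mul_le_mul h1 h2 (abs_nonneg _) hU₂pos.le)
    calc |(∫ ξ in ε..ω, U (↑x) ξ * gfun T ξ (u (clamp ξ))) -
          ∫ ξ in ε..ω, U (↑x) ξ * gfun T ξ (v (clamp ξ))|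
        ≤ U₂ * (L * dist u v) * (ω - ε) := hb
      _ = U₂ * L * (ω - ε) * dist u v := by ring
  have hAcont : Continuous A := by
    have hnn : (0:ℝ) ≤ U₂ * L * (ω - ε) := by positivity
    have : LipschitzWith (Real.toNNReal (U₂ * L * (ω - ε))) A := by
      apply LipschitzWith.of_dist_le_mul
      intro u v
      rw [Real.coe_toNNReal _ hnn]
      exact hAlip u v
    exact this.continuous
  -- uniform bound
  have hbdd : ∀ (u : C(Set.Icc ε ω, ℝ)) (x : Set.Icc ε ω),
      |A u x| ≤ U₂ * (ω - ε) := by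
    intro u x
    rw [hA' u x]
    have h := intervalIntegral.norm_integral_le_of_norm_le_const
      (C := U₂) (f := fun ξ => U (↑x) ξ * gfun T ξ (u (clamp ξ))) (a := ε) (b := ω) (by
        intro ξ hξ
        rw [Set.uIoc_of_le hεω'] at hξ
        have hξIcc : ξ ∈ Set.Icc ε ω := ⟨hξ.1.le, hξ.2⟩
        have hU := hUbd x x.2 ξ hξIcc
        rw [Real.norm_eq_abs, abs_mul]
        have h1 : |U (↑x) ξ| ≤ U₂ := by
          rw [abs_of_pos (lt_of_lt_of_le hU₁ hU.1)]; exact hU.2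
        calc |U (↑x) ξ| * |gfun T ξ (u (clamp ξ))| ≤ U₂ * 1 :=
              mul_le_mul h1 (abs_gfun_le_one _ _ _) (abs_nonneg _) hU₂pos.le
          _ = U₂ := mul_one _)
    rw [Real.norm_eq_abs, abs_of_nonneg (by linarith : (0:ℝ) ≤ ω - ε)] at h
    exact h
  -- equicontinuity
  have hequi : ∀ η : ℝ, 0 < η → ∃ δ > 0, ∀ x y : Set.Icc ε ω, dist x y < δ →
      ∀ u : C(Set.Icc ε ω, ℝ), dist (A u x) (A u y) < η := by
    intro η hη
    have hUC : UniformContinuousOn (fun p : ℝ × ℝ => U p.1 p.2)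
        (Set.Icc ε ω ×ˢ Set.Icc ε ω) :=
      (isCompact_Icc.prod isCompact_Icc).uniformContinuousOn_of_continuous hUcont
    rw [Metric.uniformContinuousOn_iff] at hUC
    have hη' : (0:ℝ) < η / (2 * (ω - ε)) := by positivity
    obtain ⟨δ, hδ, hδ'⟩ := hUC (η / (2 * (ω - ε))) hη'
    refine ⟨δ, hδ, ?_⟩
    intro x y hxy u
    rw [Real.dist_eq, hA' u x, hA' u y]
    have hb := hdiff _ _ (hint u x) (hint u y) (η / (2 * (ω - ε))) (by
      intro ξ hξ
      have hξIcc : ξ ∈ Set.Icc ε ω := ⟨hξ.1.le, hξ.2⟩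
      rw [← sub_mul, abs_mul]
      have hmem1 : ((x : ℝ), ξ) ∈ Set.Icc ε ω ×ˢ Set.Icc ε ω := ⟨x.2, hξIcc⟩
      have hmem2 : ((y : ℝ), ξ) ∈ Set.Icc ε ω ×ˢ Set.Icc ε ω := ⟨y.2, hξIcc⟩
      have hdxy : dist (((x : ℝ), ξ)) (((y : ℝ), ξ)) < δ := by
        rw [Prod.dist_eq]
        simp only [dist_self]
        rw [max_eq_left dist_nonneg, ← Subtype.dist_eq]
        exact hxy
      have hUU := hδ' _ hmem1 _ hmem2 hdxy
      rw [Real.dist_eq] at hUU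
      calc |U (↑x) ξ - U (↑y) ξ| * |gfun T ξ (u (clamp ξ))|
          ≤ (η / (2 * (ω - ε))) * 1 :=
            mul_le_mul hUU.le (abs_gfun_le_one _ _ _) (abs_nonneg _) hη'.le
        _ = η / (2 * (ω - ε)) := mul_one _)
    calc |(∫ ξ in ε..ω, U (↑x) ξ * gfun T ξ (u (clamp ξ))) -
          ∫ ξ in ε..ω, U (↑y) ξ * gfun T ξ (u (clamp ξ))|
        ≤ (η / (2 * (ω - ε))) * (ω - ε) := hb
      _ = η / 2 := by
          field_simp
      _ < η := half_lt_self hη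
  constructor
  · exact hAcont.continuousOn
  · -- compactness via Arzelà–Ascoli
    set V : Set C(Set.Icc ε ω, ℝ) := {u | ∀ x, Δ₁ ≤ u x ∧ u x ≤ Δ₂} with hV
    set e := ContinuousMap.isometryEquivBoundedOfCompact (Set.Icc ε ω) ℝ with he
    have happly : ∀ (f : C(Set.Icc ε ω, ℝ)) (x : Set.Icc ε ω), e f x = f x := by
      intro f x; rfl
    have hMcpt : IsCompact (closure (⇑e '' (A '' V))) := by
      apply BoundedContinuousFunction.arzela_ascoli
        (Set.Icc (-(U₂ * (ω - ε))) (U₂ * (ω - ε))) isCompact_Icc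
      · rintro f x ⟨g, ⟨u, hu, rfl⟩, rfl⟩
        rw [happly]
        rw [Set.mem_Icc, ← abs_le]
        exact hbdd u x
      · intro x
        rw [Metric.equicontinuousAt_iff]
        intro η hη
        obtain ⟨δ, hδ, hδ'⟩ := hequi η hη
        refine ⟨δ, hδ, ?_⟩
        intro y hy i
        obtain ⟨w, ⟨u, hu, rfl⟩, hgi⟩ := i.2
        have hlt := hδ' x y (by rwa [dist_comm] at hy) u
        calc dist ((i : BoundedContinuousFunction (↥(Set.Icc ε ω)) ℝ) x) ((i : BoundedContinuousFunction (↥(Set.Icc ε ω)) ℝ) y)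
            = dist (A u x) (A u y) := by rw [← hgi]; rfl
          _ < η := hlt
    have h1 : IsCompact (⇑e.symm '' closure (⇑e '' (A '' V))) :=
      hMcpt.image e.symm.continuous
    have h2 : closure (A '' V) ⊆ ⇑e.symm '' closure (⇑e '' (A '' V)) := by
      apply closure_minimal ?_ (h1.isClosed)
      intro s hs
      exact ⟨e s, subset_closure (Set.mem_image_of_mem _ hs), e.symm_apply_apply s⟩
    exact h1.of_isClosed_subset isClosed_closure h2
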